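/- Let ω = e^{2πi/3}, Λ = ℤω ⊕ ℤ, Λ* = (4πi/√3)Λ, ⟨z,w⟩ := Re(z·conj(w)), θ as below, z(k) := √3·k/(4πi), and F_k(z) := e^{(i/2)(z−conj(z))k}·θ(z−z(k))/θ(z). Fix p ∈ Λ* and write z(p) = m + nω with m,n ∈ ℤ. Then for every k ∈ ℂ with z(k) ∉ Λ, the quantity e_p(k) := θ(z(k))/θ(z(k+p)) satisfies e_p(k) = (−1)^{m+n}·e^{πin²ω + 2πin·z(k)}, and for every z ∈ ℂ∖Λ one has F_{k+p}(z) = e_p(k)^{−1}·e^{−i⟨z,p⟩}·F_k(z). -/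

import Mathlib

open Complex

noncomputable section

/-- `ω = e^{2πi/3}`. -/
def ω : ℂ := Complex.exp (2 * (Real.pi : ℂ) * Complex.I / 3)

/-- The hexagonal lattice `Λ = ℤω ⊕ ℤ`. -/
def inΛ (γ : ℂ) : Prop := ∃ m n : ℤ, γ = (m : ℂ) * ω + (n : ℂ)

/-- The dual lattice `Λ* = (4πi/√3) Λ`. -/
def inΛstar (p : ℂ) : Prop :=
  ∃ γ : ℂ, inΛ γ ∧ p = (4 * (Real.pi : ℂ) * Complex.I / (Real.sqrt 3 : ℂ)) * γ

/-- The pairing `⟨z,w⟩ = Re (z ⬝ conj w)`. -/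
def pairing (z w : ℂ) : ℝ := (z * (starRingEnd ℂ) w).re

/-- The Jacobi theta function `θ₁(z|ω)`. -/
def θ (z : ℂ) : ℂ :=
  -∑' n : ℤ, Complex.exp ((Real.pi : ℂ) * Complex.I * ((n : ℂ) + 1/2)^2 * ω
      + 2 * (Real.pi : ℂ) * Complex.I * ((n : ℂ) + 1/2) * (z + 1/2))

/-- `z(k) = √3 k/(4πi)`. -/
def zmap (k : ℂ) : ℂ := (Real.sqrt 3 : ℂ) * k / (4 * (Real.pi : ℂ) * Complex.I)

/-- `F_k(z) = e^{(i/2)(z - z̄)k} θ(z - z(k))/θ(z)`. -/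
def F (k z : ℂ) : ℂ :=
  Complex.exp ((Complex.I / 2) * (z - (starRingEnd ℂ) z) * k) * θ (z - zmap k) / θ z

lemma omega_eq : ω = (-1/2 : ℝ) + (Real.sqrt 3 / 2 : ℝ) * Complex.I := by
  have h3 : (2 * (Real.pi : ℂ) * Complex.I / 3) = ((2 * Real.pi / 3 : ℝ) : ℂ) * Complex.I := by
    push_cast; ring
  have h4 : (2 * Real.pi / 3 : ℝ) = Real.pi - Real.pi/3 := by ring
  rw [ω, h3, Complex.exp_mul_I, ← Complex.ofReal_cos, ← Complex.ofReal_sin, h4,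
    Real.cos_pi_sub, Real.sin_pi_sub, Real.cos_pi_div_three, Real.sin_pi_div_three]
  norm_num

lemma omega_im : ω.im = Real.sqrt 3 / 2 := by rw [omega_eq]; simp

lemma omega_re : ω.re = -1/2 := by rw [omega_eq]; simp

lemma conj_omega : (starRingEnd ℂ) ω = -1 - ω := by
  rw [omega_eq]; apply Complex.ext <;> simp [Complex.div_re, Complex.div_im, Complex.normSq] <;> norm_num <;> ring

lemma one_add_two_omega : 1 + 2 * ω = (Real.sqrt 3 : ℂ) * Complex.I := by
  rw [omega_eq]; apply Complex.ext <;> simp [Complex.div_im, Complex.div_re] <;> norm_num <;> ring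

lemma sqrt3_pos : (0:ℝ) < Real.sqrt 3 := Real.sqrt_pos.mpr (by norm_num)

lemma sqrt3_ge : (4/3 : ℝ) ≤ Real.sqrt 3 := by
  rw [show (4/3:ℝ) = Real.sqrt ((4/3)^2) by rw [Real.sqrt_sq]; norm_num]
  apply Real.sqrt_le_sqrt; norm_num

def T (n : ℤ) (z : ℂ) : ℂ :=
  Complex.exp ((Real.pi : ℂ) * Complex.I * ((n : ℂ) + 1/2)^2 * ω
      + 2 * (Real.pi : ℂ) * Complex.I * ((n : ℂ) + 1/2) * (z + 1/2))

lemma theta_eq (z : ℂ) : θ z = -∑' n : ℤ, T n z := rfl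

lemma T_eq_jacobi (n : ℤ) (z : ℂ) :
    T n z = Complex.exp ((Real.pi:ℂ) * Complex.I * ω / 4 + (Real.pi:ℂ) * Complex.I * (z + 1/2))
      * jacobiTheta₂_term n (z + 1/2 + ω/2) ω := by
  rw [T, jacobiTheta₂_term, ← Complex.exp_add]
  congr 1
  ring

lemma summableT (z : ℂ) : Summable (fun n : ℤ => T n z) := by
  have h : Summable (fun n : ℤ => jacobiTheta₂_term n (z + 1/2 + ω/2) ω) :=
    (summable_jacobiTheta₂_term_iff _ _).mpr (by rw [omega_im]; positivity)
  have := h.mul_left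
    (Complex.exp ((Real.pi:ℂ) * Complex.I * ω / 4 + (Real.pi:ℂ) * Complex.I * (z + 1/2)))
  exact this.congr (fun n => (T_eq_jacobi n z).symm)

lemma exp_half_odd (n : ℕ) :
    Complex.exp ((2*(n:ℂ)+1) * (Real.pi:ℂ) * Complex.I / 2) = (-1:ℂ)^n * Complex.I := by
  have : (2*(n:ℂ)+1) * (Real.pi:ℂ) * Complex.I / 2
      = (n:ℂ) * ((Real.pi:ℂ) * Complex.I) + ((Real.pi:ℝ)/2 : ℝ) * Complex.I := by
    push_cast; ring
  rw [this, Complex.exp_add, Complex.exp_nat_mul, Complex.exp_pi_mul_I, Complex.exp_mul_I,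
    ← Complex.ofReal_cos, ← Complex.ofReal_sin, Real.cos_pi_div_two, Real.sin_pi_div_two]
  push_cast
  ring

lemma T_pair (n : ℕ) (z : ℂ) :
    T n z + T (-(n+1)) z
      = -2 * (-1:ℂ)^n * Complex.exp ((Real.pi:ℂ) * Complex.I * ((n:ℂ) + 1/2)^2 * ω)
          * Complex.sin ((2*(n:ℂ)+1) * (Real.pi:ℂ) * z) := by
  set a : ℂ := (Real.pi:ℂ) * Complex.I * ((n:ℂ) + 1/2)^2 * ω with ha
  set c : ℂ := (2*(n:ℂ)+1) * (Real.pi:ℂ) * z * Complex.I with hc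
  have h1 : T n z = Complex.exp (a + c) * Complex.exp ((2*(n:ℂ)+1) * (Real.pi:ℂ) * Complex.I / 2) := by
    rw [T, ← Complex.exp_add]; congr 1; push_cast; ring
  have h2 : T (-(n+1)) z
      = Complex.exp (a - c) * Complex.exp (-((2*(n:ℂ)+1) * (Real.pi:ℂ) * Complex.I / 2)) := by
    rw [T, ← Complex.exp_add]; congr 1; push_cast; ring
  have hI : ((-1:ℂ)^n * Complex.I)⁻¹ = -((-1:ℂ)^n * Complex.I) := by
    rw [mul_inv, Complex.inv_I]
    simp [inv_pow]
    rw [← inv_pow, inv_neg, inv_one]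
  rw [h1, h2, exp_half_odd, Complex.exp_neg, exp_half_odd, hI, Complex.sin]
  have e1 : -((2*(n:ℂ)+1) * (Real.pi:ℂ) * z) * Complex.I = -c := by rw [hc]; ring
  rw [e1, Complex.exp_add, Complex.exp_sub, Complex.exp_neg]
  field_simp [Complex.exp_ne_zero]
  rw [hc]; ring_nf

lemma norm_cos_le (u : ℂ) : ‖Complex.cos u‖ ≤ Real.exp |u.im| := by
  have h1 : ‖Complex.exp (u * Complex.I)‖ ≤ Real.exp |u.im| := by
    rw [Complex.norm_exp]
    apply Real.exp_le_exp.mpr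
    simp [Complex.mul_I_re]
    cases abs_cases u.im <;> linarith
  have h2 : ‖Complex.exp (-u * Complex.I)‖ ≤ Real.exp |u.im| := by
    rw [Complex.norm_exp]
    apply Real.exp_le_exp.mpr
    simp [Complex.mul_I_re]
    cases abs_cases u.im <;> linarith
  rw [Complex.cos, norm_div]
  have h2' : ‖(2:ℂ)‖ = 2 := by norm_num
  rw [h2']
  have := (norm_add_le (Complex.exp (u*Complex.I)) (Complex.exp (-u*Complex.I))).trans
    (add_le_add h1 h2)
  linarith

lemma sin_growth (n : ℕ) (w : ℂ) :
    ‖Complex.sin ((2*(n:ℂ)+1) * w)‖ ≤ (2*(n:ℝ)+1) * Real.exp (2*n*|w.im|) * ‖Complex.sin w‖ := by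
  induction n with
  | zero => simp
  | succ n ih =>
    push_cast
    have key : Complex.sin ((2*((n:ℂ)+1)+1) * w)
        = Complex.sin ((2*(n:ℂ)+1) * w) + 2 * Complex.sin w * Complex.cos ((2*(n:ℂ)+2) * w) := by
      have := Complex.sin_sub_sin ((2*((n:ℂ)+1)+1) * w) ((2*(n:ℂ)+1) * w)
      have h1 : ((2*((n:ℂ)+1)+1) * w - (2*(n:ℂ)+1) * w) / 2 = w := by ring
      have h2 : ((2*((n:ℂ)+1)+1) * w + (2*(n:ℂ)+1) * w) / 2 = (2*(n:ℂ)+2) * w := by ring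
      rw [h1, h2] at this
      linear_combination this
    have him : |((2*(n:ℂ)+2) * w).im| = (2*(n:ℝ)+2) * |w.im| := by
      have h0 : ((2*(n:ℂ)+2) * w).im = (2*(n:ℝ)+2) * w.im := by
        simp [Complex.mul_im]
        try push_cast
        try ring
      rw [h0, abs_mul, _root_.abs_of_nonneg (by positivity : (0:ℝ) ≤ 2*(n:ℝ)+2)]
    have hcos : ‖Complex.cos ((2*(n:ℂ)+2) * w)‖ ≤ Real.exp ((2*(n:ℝ)+2)*|w.im|) := by
      calc ‖Complex.cos ((2*(n:ℂ)+2) * w)‖ ≤ Real.exp |((2*(n:ℂ)+2) * w).im| := norm_cos_le _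
        _ = Real.exp ((2*(n:ℝ)+2)*|w.im|) := by rw [him]
    have e1 : Real.exp (2*(n:ℝ)*|w.im|) ≤ Real.exp ((2*(n:ℝ)+2)*|w.im|) := by
      apply Real.exp_le_exp.mpr
      nlinarith [abs_nonneg w.im]
    calc ‖Complex.sin ((2*((n:ℂ)+1)+1) * w)‖
        ≤ ‖Complex.sin ((2*(n:ℂ)+1) * w)‖ + ‖2 * Complex.sin w * Complex.cos ((2*(n:ℂ)+2) * w)‖ := by
          rw [key]; exact norm_add_le _ _
      _ = ‖Complex.sin ((2*(n:ℂ)+1) * w)‖ + 2 * ‖Complex.sin w‖ * ‖Complex.cos ((2*(n:ℂ)+2) * w)‖ := by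
          rw [norm_mul, norm_mul]; norm_num
      _ ≤ (2*(n:ℝ)+1) * Real.exp (2*n*|w.im|) * ‖Complex.sin w‖
          + 2 * ‖Complex.sin w‖ * Real.exp ((2*(n:ℝ)+2)*|w.im|) := by
          exact add_le_add ih (by gcongr)
      _ ≤ (2*((n:ℝ)+1)+1) * Real.exp (2*((n:ℝ)+1)*|w.im|) * ‖Complex.sin w‖ := by
          have e2 : 2*((n:ℝ)+1)*|w.im| = (2*(n:ℝ)+2)*|w.im| := by ring
          rw [e2]
          nlinarith [norm_nonneg (Complex.sin w), Real.exp_pos ((2*(n:ℝ)+2)*|w.im|),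
            mul_le_mul_of_nonneg_right
              (mul_le_mul_of_nonneg_left e1 (by positivity : (0:ℝ) ≤ 2*(n:ℝ)+1))
              (norm_nonneg (Complex.sin w))]

lemma exp_re_coeff (n : ℕ) :
    ((Real.pi:ℂ) * Complex.I * ((n:ℂ) + 1/2)^2 * ω).re
      = -(Real.pi * ω.im * ((n:ℝ)+1/2)^2) := by
  have h : (Real.pi:ℂ) * Complex.I * ((n:ℂ) + 1/2)^2 * ω
      = ((Real.pi * ((n:ℝ)+1/2)^2 : ℝ):ℂ) * (Complex.I * ω) := by push_cast; ring
  rw [h, Complex.re_ofReal_mul, Complex.I_mul_re]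
  ring

lemma two_n_one_le (n : ℕ) : (2*(n:ℝ)+1) ≤ 3^n := by
  induction n with
  | zero => norm_num
  | succ n ih =>
    rw [pow_succ]
    push_cast
    nlinarith [ih]

lemma theta_strip_ne_zero (w : ℂ) (him : |w.im| ≤ Real.sqrt 3 / 4)
    (hs : Complex.sin ((Real.pi:ℂ) * w) ≠ 0) : θ w ≠ 0 := by
  classical
  set t : ℝ := Real.pi * ω.im with ht
  set S : ℝ := ‖Complex.sin ((Real.pi:ℂ) * w)‖ with hS
  have hSpos : 0 < S := norm_pos_iff.mpr hs
  have htge : 2 ≤ t := by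
    rw [ht, omega_im]
    nlinarith [Real.pi_gt_three, sqrt3_ge]
  have htpos : (0:ℝ) < t := by linarith
  set v : ℕ → ℂ := fun n => -(T (n:ℤ) w + T (-((n:ℤ)+1)) w) with hv
  have hsumT := summableT w
  have hsum1 : Summable (fun n : ℕ => T (n:ℤ) w) :=
    hsumT.comp_injective (fun a b h => by exact_mod_cast h)
  have hsum2 : Summable (fun n : ℕ => T (-((n:ℤ)+1)) w) :=
    hsumT.comp_injective (fun a b h => by omega)
  have hvsum : Summable v := ((hsum1.add hsum2).neg).congr (fun n => by simp [hv])
  have hθ : θ w = ∑' n : ℕ, v n := by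
    rw [theta_eq, ← tsum_nat_add_neg_add_one hsumT, ← tsum_neg]
  have hvnorm : ∀ n : ℕ, ‖v n‖
      = 2 * Real.exp (-(t * ((n:ℝ)+1/2)^2))
          * ‖Complex.sin ((2*(n:ℂ)+1) * ((Real.pi:ℂ) * w))‖ := by
    intro n
    have hTp := T_pair n w
    have harg : (2*(n:ℂ)+1) * (Real.pi:ℂ) * w = (2*(n:ℂ)+1) * ((Real.pi:ℂ) * w) := by ring
    rw [harg] at hTp
    rw [hv]
    simp only [hTp, norm_neg, norm_mul]
    rw [Complex.norm_exp, exp_re_coeff]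
    simp [ht]
    try ring
  set r : ℝ := 3 * Real.exp (-t) with hr
  have hrpos : 0 < r := by positivity
  have hrlt : r < 1/2 := by
    have h6 : (6:ℝ) < Real.exp t := by
      calc (6:ℝ) < 2.7^2 := by norm_num
        _ ≤ Real.exp 1 ^ 2 := by nlinarith [Real.exp_one_gt_d9]
        _ = Real.exp 2 := by rw [← Real.exp_nat_mul]; norm_num
        _ ≤ Real.exp t := Real.exp_le_exp.mpr htge
    have hpos := Real.exp_pos t
    have hinv : Real.exp t * (Real.exp t)⁻¹ = 1 := mul_inv_cancel₀ hpos.ne'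
    have hinvpos : 0 < (Real.exp t)⁻¹ := inv_pos.mpr hpos
    rw [hr, Real.exp_neg]
    nlinarith [hinv, h6, hinvpos]
  set B : ℝ := 2 * Real.exp (-(t/4)) * S with hB
  have hBpos : 0 < B := by positivity
  have hvb : ∀ n : ℕ, ‖v n‖ ≤ B * r^n := by
    intro n
    rw [hvnorm n]
    have h1 : ‖Complex.sin ((2*(n:ℂ)+1) * ((Real.pi:ℂ) * w))‖
        ≤ (2*(n:ℝ)+1) * Real.exp (2*n*|((Real.pi:ℂ) * w).im|) * S := sin_growth n _
    have him2 : |((Real.pi:ℂ) * w).im| = Real.pi * |w.im| := by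
      have h0 : ((Real.pi:ℂ) * w).im = Real.pi * w.im := by simp
      rw [h0, abs_mul, _root_.abs_of_nonneg Real.pi_pos.le]
    have hkey : 0 ≤ Real.pi * (Real.sqrt 3 / 2) - 2 * (Real.pi * |w.im|) := by
      nlinarith [Real.pi_pos, him]
    have him3 : 2*(n:ℝ)*|((Real.pi:ℂ) * w).im| ≤ (n:ℝ) * t := by
      rw [him2, ht, omega_im]
      nlinarith [mul_nonneg (Nat.cast_nonneg (α := ℝ) n) hkey]
    have hexp : Real.exp (-(t * ((n:ℝ)+1/2)^2)) * Real.exp ((n:ℝ)*t)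
        = Real.exp (-(t/4)) * Real.exp (-(t*(n:ℝ)^2)) := by
      rw [← Real.exp_add, ← Real.exp_add]
      congr 1
      ring
    have hnn : (n:ℝ) ≤ (n:ℝ)^2 := by exact_mod_cast Nat.le_self_pow two_ne_zero n
    have h2 : Real.exp (-(t*(n:ℝ)^2)) ≤ Real.exp ((n:ℝ)*(-t)) := by
      apply Real.exp_le_exp.mpr
      nlinarith [mul_le_mul_of_nonneg_left hnn htpos.le]
    have h3 := two_n_one_le n
    have h5 := Real.exp_pos (-(t*(n:ℝ)^2))
    have hS2 : (0:ℝ) < 2 * Real.exp (-(t/4)) * S := by positivity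
    have core : (2*(n:ℝ)+1) * Real.exp (-(t*(n:ℝ)^2)) ≤ 3^n * Real.exp ((n:ℝ)*(-t)) :=
      mul_le_mul h3 h2 h5.le (by positivity)
    have core2 := mul_le_mul_of_nonneg_left core hS2.le
    calc 2 * Real.exp (-(t * ((n:ℝ)+1/2)^2)) * ‖Complex.sin ((2*(n:ℂ)+1) * ((Real.pi:ℂ) * w))‖
        ≤ 2 * Real.exp (-(t * ((n:ℝ)+1/2)^2)) * ((2*(n:ℝ)+1) * Real.exp ((n:ℝ)*t) * S) := by
          apply mul_le_mul_of_nonneg_left _ (by positivity)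
          refine h1.trans ?_
          gcongr
      _ = 2 * Real.exp (-(t/4)) * S * ((2*(n:ℝ)+1) * Real.exp (-(t*(n:ℝ)^2))) := by
          calc 2 * Real.exp (-(t * ((n:ℝ)+1/2)^2)) * ((2*(n:ℝ)+1) * Real.exp ((n:ℝ)*t) * S)
              = 2 * (Real.exp (-(t * ((n:ℝ)+1/2)^2)) * Real.exp ((n:ℝ)*t)) * ((2*(n:ℝ)+1) * S) := by
                ring
            _ = 2 * (Real.exp (-(t/4)) * Real.exp (-(t*(n:ℝ)^2))) * ((2*(n:ℝ)+1) * S) := by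
                rw [hexp]
            _ = 2 * Real.exp (-(t/4)) * S * ((2*(n:ℝ)+1) * Real.exp (-(t*(n:ℝ)^2))) := by
                ring
      _ ≤ B * r^n := by
          rw [hB, hr, mul_pow]
          have hrn : Real.exp (-t) ^ n = Real.exp ((n:ℝ) * -t) := by rw [← Real.exp_nat_mul]
          rw [hrn]
          exact core2
  have hv0 : ‖v 0‖ = B := by
    have h1 : -(t * (((0:ℕ):ℝ)+1/2)^2) = -(t/4) := by norm_num; ring
    have h2 : (2*((0:ℕ):ℂ)+1) * ((Real.pi:ℂ)*w) = (Real.pi:ℂ)*w := by norm_num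
    rw [hvnorm 0, h1, h2, hB, hS]
  have hvsum1 : Summable (fun n : ℕ => v (n+1)) := (summable_nat_add_iff 1).mpr hvsum
  have hgeo0 : Summable (fun n : ℕ => r^n) := summable_geometric_of_lt_one hrpos.le (by linarith)
  have hgs : ∑' n:ℕ, r^(n+1) = r * (1-r)⁻¹ := by
    rw [← tsum_geometric_of_lt_one hrpos.le (by linarith), ← tsum_mul_left]
    exact tsum_congr fun n => by rw [pow_succ]; ring
  have htail : ‖∑' n : ℕ, v (n+1)‖ ≤ B * r * (1-r)⁻¹ := by
    have hgeo : Summable (fun n : ℕ => B * r^(n+1)) := by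
      apply Summable.mul_left
      exact ((summable_nat_add_iff 1).mpr hgeo0)
    calc ‖∑' n : ℕ, v (n+1)‖ ≤ ∑' n : ℕ, ‖v (n+1)‖ := norm_tsum_le_tsum_norm hvsum1.norm
      _ ≤ ∑' n : ℕ, B * r^(n+1) := Summable.tsum_le_tsum (fun n => hvb (n+1)) hvsum1.norm hgeo
      _ = B * (r * (1-r)⁻¹) := by rw [tsum_mul_left, hgs]
      _ = B * r * (1-r)⁻¹ := by ring
  have hθsplit : θ w = v 0 + ∑' n : ℕ, v (n+1) := by
    rw [hθ]
    exact hvsum.tsum_eq_zero_add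
  have hfrac : B * r * (1-r)⁻¹ < B := by
    have h1r : 0 < 1 - r := by linarith
    have hq : r * (1-r)⁻¹ < 1 := by
      rw [← div_eq_mul_inv, div_lt_one h1r]; linarith
    calc B * r * (1-r)⁻¹ = B * (r * (1-r)⁻¹) := by ring
      _ < B * 1 := mul_lt_mul_of_pos_left hq hBpos
      _ = B := mul_one B
  have hlow : ‖v 0‖ ≤ ‖v 0 + ∑' n : ℕ, v (n+1)‖ + ‖∑' n : ℕ, v (n+1)‖ := by
    have h0 : v 0 = (v 0 + ∑' n : ℕ, v (n+1)) + (-(∑' n : ℕ, v (n+1))) := by ring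
    calc ‖v 0‖ = ‖(v 0 + ∑' n : ℕ, v (n+1)) + (-(∑' n : ℕ, v (n+1)))‖ := by rw [← h0]
      _ ≤ ‖v 0 + ∑' n : ℕ, v (n+1)‖ + ‖-(∑' n : ℕ, v (n+1))‖ := norm_add_le _ _
      _ = ‖v 0 + ∑' n : ℕ, v (n+1)‖ + ‖∑' n : ℕ, v (n+1)‖ := by rw [norm_neg]
  have hpos : 0 < ‖θ w‖ := by
    rw [hθsplit]
    have := htail
    rw [hv0] at hlow
    linarith
  intro h
  rw [h] at hpos
  simp at hpos

lemma theta_add_one (z : ℂ) : θ (z + 1) = -θ z := by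
  have hn : ∀ n : ℤ, T n (z + 1) = -T n z := by
    intro n
    rw [T, T]
    have h : (Real.pi:ℂ) * Complex.I * ((n:ℂ) + 1/2)^2 * ω
          + 2*(Real.pi:ℂ)*Complex.I*((n:ℂ)+1/2)*(z+1+1/2)
        = ((Real.pi:ℂ) * Complex.I * ((n:ℂ) + 1/2)^2 * ω
          + 2*(Real.pi:ℂ)*Complex.I*((n:ℂ)+1/2)*(z+1/2))
          + ((n:ℂ) * (2*(Real.pi:ℂ)*Complex.I) + (Real.pi:ℂ)*Complex.I) := by ring
    rw [h, Complex.exp_add, Complex.exp_add, Complex.exp_add, Complex.exp_int_mul_two_pi_mul_I,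
      Complex.exp_pi_mul_I]
    ring
  rw [theta_eq, theta_eq, tsum_congr hn, tsum_neg]

lemma theta_add_omega (z : ℂ) :
    θ (z + ω) = -Complex.exp (-(Real.pi:ℂ)*Complex.I*ω - 2*(Real.pi:ℂ)*Complex.I*z) * θ z := by
  have key : ∀ n : ℤ, T (n+1) z
      = -Complex.exp ((Real.pi:ℂ)*Complex.I*ω + 2*(Real.pi:ℂ)*Complex.I*z) * T n (z + ω) := by
    intro n
    rw [T, T]
    have h : (Real.pi:ℂ) * Complex.I * (((n+1:ℤ):ℂ) + 1/2)^2 * ω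
          + 2*(Real.pi:ℂ)*Complex.I*(((n+1:ℤ):ℂ)+1/2)*(z+1/2)
        = ((Real.pi:ℂ)*Complex.I*ω + 2*(Real.pi:ℂ)*Complex.I*z) + (Real.pi:ℂ)*Complex.I
          + ((Real.pi:ℂ) * Complex.I * ((n:ℂ) + 1/2)^2 * ω
            + 2*(Real.pi:ℂ)*Complex.I*((n:ℂ)+1/2)*(z+ω+1/2)) := by push_cast; ring
    rw [h, Complex.exp_add, Complex.exp_add, Complex.exp_pi_mul_I]
    ring
  have hshift : ∑' n : ℤ, T n z = ∑' n : ℤ, T (n+1) z :=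
    ((Equiv.addRight (1:ℤ)).tsum_eq (fun n => T n z)).symm
  have h2 : ∑' n : ℤ, T (n+1) z
      = -Complex.exp ((Real.pi:ℂ)*Complex.I*ω + 2*(Real.pi:ℂ)*Complex.I*z)
          * ∑' n : ℤ, T n (z + ω) := by
    rw [← tsum_mul_left]
    exact tsum_congr key
  have hθz : θ z = -Complex.exp ((Real.pi:ℂ)*Complex.I*ω + 2*(Real.pi:ℂ)*Complex.I*z)
      * θ (z + ω) := by
    rw [theta_eq, theta_eq, hshift, h2]
    ring
  have hprod : Complex.exp (-(Real.pi:ℂ)*Complex.I*ω - 2*(Real.pi:ℂ)*Complex.I*z)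
      * Complex.exp ((Real.pi:ℂ)*Complex.I*ω + 2*(Real.pi:ℂ)*Complex.I*z) = 1 := by
    rw [← Complex.exp_add,
      show -(Real.pi:ℂ)*Complex.I*ω - 2*(Real.pi:ℂ)*Complex.I*z
        + ((Real.pi:ℂ)*Complex.I*ω + 2*(Real.pi:ℂ)*Complex.I*z) = 0 from by ring,
      Complex.exp_zero]
  rw [hθz]
  linear_combination (-(θ (z + ω))) * hprod

lemma theta_add_int (z : ℂ) (m : ℤ) : θ (z + m) = (-1:ℂ)^m * θ z := by
  induction m using Int.induction_on with
  | zero => simp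
  | succ n ih =>
    have h : z + ((n:ℤ)+1 : ℤ) = (z + (n:ℤ)) + 1 := by push_cast; ring
    rw [h, theta_add_one, ih, zpow_add₀ (by norm_num : (-1:ℂ) ≠ 0)]
    ring
  | pred n ih =>
    have h : z + ((-n:ℤ)-1 : ℤ) + 1 = z + (-n:ℤ) := by push_cast; ring
    have key := theta_add_one (z + ((-n:ℤ)-1 : ℤ))
    rw [h, ih] at key
    have hzp : (-1:ℂ)^(-(n:ℤ)-1) = -(-1:ℂ)^(-(n:ℤ)) := by
      rw [zpow_sub₀ (by norm_num : (-1:ℂ) ≠ 0), zpow_one]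
      ring
    rw [hzp]
    linear_combination key

lemma theta_add_int_omega (z : ℂ) (n : ℤ) :
    θ (z + n * ω) = (-1:ℂ)^n
      * Complex.exp (-(Real.pi:ℂ)*Complex.I*(n:ℂ)^2*ω - 2*(Real.pi:ℂ)*Complex.I*(n:ℂ)*z)
      * θ z := by
  induction n using Int.induction_on with
  | zero => simp
  | succ n ih =>
    have h : z + (((n:ℤ)+1 : ℤ) : ℂ) * ω = (z + (n:ℤ) * ω) + ω := by push_cast; ring
    rw [h, theta_add_omega, ih, zpow_add₀ (by norm_num : (-1:ℂ) ≠ 0), zpow_one]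
    have hd : Complex.exp (-(Real.pi:ℂ)*Complex.I*ω - 2*(Real.pi:ℂ)*Complex.I*(z + ((n:ℤ):ℂ)*ω))
        * Complex.exp (-(Real.pi:ℂ)*Complex.I*((n:ℤ):ℂ)^2*ω - 2*(Real.pi:ℂ)*Complex.I*((n:ℤ):ℂ)*z)
        = Complex.exp (-(Real.pi:ℂ)*Complex.I*(((n:ℤ)+1:ℤ):ℂ)^2*ω
            - 2*(Real.pi:ℂ)*Complex.I*(((n:ℤ)+1:ℤ):ℂ)*z) := by
      rw [← Complex.exp_add]
      congr 1
      push_cast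
      ring
    linear_combination (-((-1:ℂ)^(n:ℤ)) * θ z) * hd
  | pred n ih =>
    have h : z + ((-(n:ℤ)-1 : ℤ) : ℂ) * ω + ω = z + ((-(n:ℤ) : ℤ) : ℂ) * ω := by push_cast; ring
    have key := theta_add_omega (z + ((-(n:ℤ)-1 : ℤ) : ℂ) * ω)
    rw [h, ih] at key
    have hzp : (-1:ℂ)^(-(n:ℤ)-1) = -(-1:ℂ)^(-(n:ℤ)) := by
      rw [zpow_sub₀ (by norm_num : (-1:ℂ) ≠ 0), zpow_one]
      ring
    rw [hzp]
    -- key : (-1)^(-n) * exp(c) * θ z = -exp(b) * θ (z + (-n-1) ω)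
    -- want : θ (z + (-n-1) ω) = -(-1)^(-n) * exp(d) * θ z  with  b·d-relation: c = b + d
    have hd : Complex.exp (-(Real.pi:ℂ)*Complex.I*ω
          - 2*(Real.pi:ℂ)*Complex.I*(z + ((-(n:ℤ)-1 : ℤ) : ℂ) * ω))
        * Complex.exp (-(Real.pi:ℂ)*Complex.I*((-(n:ℤ)-1:ℤ):ℂ)^2*ω
            - 2*(Real.pi:ℂ)*Complex.I*((-(n:ℤ)-1:ℤ):ℂ)*z)
        = Complex.exp (-(Real.pi:ℂ)*Complex.I*((-(n:ℤ):ℤ):ℂ)^2*ω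
            - 2*(Real.pi:ℂ)*Complex.I*((-(n:ℤ):ℤ):ℂ)*z) := by
      rw [← Complex.exp_add]
      congr 1
      push_cast
      ring
    -- from key :  (-1)^(-n) * exp c * θ z = -exp b * X   where X = θ (z + (-n-1)ω)
    -- goal : X = -(-1)^(-n) * exp d * θ z
    -- multiply key by exp(-b):
    have hb := Complex.exp_ne_zero (-(Real.pi:ℂ)*Complex.I*ω
          - 2*(Real.pi:ℂ)*Complex.I*(z + ((-(n:ℤ)-1 : ℤ) : ℂ) * ω))
    apply mul_left_cancel₀ hb
    linear_combination ((-1:ℂ)^(-(n:ℤ)) * θ z) * hd + key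

lemma theta_quasi (z : ℂ) (m n : ℤ) :
    θ (z + (m:ℂ) + (n:ℂ) * ω) = (-1:ℂ)^(m+n)
      * Complex.exp (-(Real.pi:ℂ)*Complex.I*(n:ℂ)^2*ω - 2*(Real.pi:ℂ)*Complex.I*(n:ℂ)*z)
      * θ z := by
  have h1 : z + (m:ℂ) + (n:ℂ) * ω = (z + (m:ℂ)) + (n:ℂ) * ω := by ring
  rw [h1, theta_add_int_omega, theta_add_int, zpow_add₀ (by norm_num : (-1:ℂ) ≠ 0)]
  have harg : -(Real.pi:ℂ)*Complex.I*(n:ℂ)^2*ω - 2*(Real.pi:ℂ)*Complex.I*(n:ℂ)*(z + (m:ℂ))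
      = (-(Real.pi:ℂ)*Complex.I*(n:ℂ)^2*ω - 2*(Real.pi:ℂ)*Complex.I*(n:ℂ)*z)
        + (((-(n*m) : ℤ)) : ℂ) * (2*(Real.pi:ℂ)*Complex.I) := by push_cast; ring
  rw [harg, Complex.exp_add, Complex.exp_int_mul_two_pi_mul_I]
  ring

lemma int_not_inΛ {z : ℂ} (hz : ¬ inΛ z) (j : ℤ) : z ≠ (j:ℂ) := by
  intro h
  exact hz ⟨0, j, by simp [h]⟩

lemma theta_ne_zero {z : ℂ} (hz : ¬ inΛ z) : θ z ≠ 0 := by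
  set n : ℤ := round (z.im / (Real.sqrt 3 / 2)) with hn
  set w : ℂ := z - (n:ℂ) * ω with hw
  have hzw : z = w + (n:ℂ) * ω := by rw [hw]; ring
  have hwim : w.im = z.im - (n:ℝ) * (Real.sqrt 3 / 2) := by
    rw [hw]
    simp [Complex.sub_im, Complex.mul_im, omega_im, omega_re]
  have him : |w.im| ≤ Real.sqrt 3 / 4 := by
    rw [hwim]
    have h2 : z.im - (n:ℝ) * (Real.sqrt 3 / 2)
        = (z.im / (Real.sqrt 3 / 2) - (n:ℝ)) * (Real.sqrt 3 / 2) := by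
      field_simp
    rw [h2, abs_mul, _root_.abs_of_nonneg (by positivity : (0:ℝ) ≤ Real.sqrt 3 / 2)]
    have h3 := abs_sub_round (z.im / (Real.sqrt 3 / 2))
    rw [← hn] at h3
    nlinarith [sqrt3_pos]
  have hsin : Complex.sin ((Real.pi:ℂ) * w) ≠ 0 := by
    intro h
    rcases Complex.sin_eq_zero_iff.mp h with ⟨j, hj⟩
    have hpi : ((Real.pi:ℂ)) ≠ 0 := by
      exact Complex.ofReal_ne_zero.mpr Real.pi_ne_zero
    have hwj : w = (j:ℂ) := by
      apply mul_left_cancel₀ hpi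
      rw [hj]
      ring
    apply hz
    exact ⟨n, j, by rw [hzw, hwj]; ring⟩
  have hwne : θ w ≠ 0 := theta_strip_ne_zero w him hsin
  have hq := theta_add_int_omega w n
  rw [← hzw] at hq
  rw [hq]
  apply mul_ne_zero (mul_ne_zero _ (Complex.exp_ne_zero _)) hwne
  intro h
  have := zpow_ne_zero n (by norm_num : (-1:ℂ) ≠ 0)
  exact this h

lemma sqrt3_C_ne : (Real.sqrt 3 : ℂ) ≠ 0 := Complex.ofReal_ne_zero.mpr sqrt3_pos.ne'

lemma piI4_ne : (4 * (Real.pi : ℂ) * Complex.I) ≠ 0 := by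
  apply mul_ne_zero (mul_ne_zero (by norm_num) _) Complex.I_ne_zero
  exact Complex.ofReal_ne_zero.mpr Real.pi_ne_zero

theorem stmt5 (p : ℂ) (hp : inΛstar p) (m n : ℤ) (hmn : zmap p = (m : ℂ) + (n : ℂ) * ω)
    (k : ℂ) (hk : ¬ inΛ (zmap k)) :
    θ (zmap k) / θ (zmap (k + p))
        = (-1 : ℂ) ^ (m + n) *
          Complex.exp ((Real.pi : ℂ) * Complex.I * (n : ℂ)^2 * ω
            + 2 * (Real.pi : ℂ) * Complex.I * (n : ℂ) * zmap k) ∧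
    ∀ z : ℂ, ¬ inΛ z →
      F (k + p) z = (θ (zmap k) / θ (zmap (k + p)))⁻¹
          * Complex.exp (-Complex.I * (pairing z p : ℂ)) * F k z := by
  have hpω : p = ((m:ℂ) + (n:ℂ) * ω) * (4*(Real.pi:ℂ)*Complex.I) / (Real.sqrt 3 : ℂ) := by
    have h4 : (Real.sqrt 3:ℂ) * p = ((m:ℂ)+(n:ℂ)*ω) * (4*(Real.pi:ℂ)*Complex.I) := by
      have h5 := hmn
      rw [zmap, div_eq_iff piI4_ne] at h5
      linear_combination h5
    rw [eq_div_iff sqrt3_C_ne]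
    linear_combination h4
  have hconjp : (starRingEnd ℂ) p = -p - 4*(Real.pi:ℂ)*(n:ℂ) := by
    rw [hpω]
    simp only [map_div₀, map_mul, map_add, conj_omega, Complex.conj_I, map_intCast,
      Complex.conj_ofReal, map_ofNat]
    field_simp
    linear_combination ((n:ℂ)*Complex.I) * one_add_two_omega
      + ((n:ℂ)*(Real.sqrt 3:ℂ)) * Complex.I_sq
  have hzmapadd : zmap (k+p) = zmap k + ((m:ℂ) + (n:ℂ) * ω) := by
    have h0 : zmap (k+p) = zmap k + zmap p := by rw [zmap, zmap, zmap]; ring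
    rw [h0, hmn]
  have hθk := theta_ne_zero hk
  have hQQ : ((-1:ℂ)^(m+n)) * ((-1:ℂ)^(m+n)) = 1 := by
    rw [← zpow_add₀ (by norm_num : (-1:ℂ) ≠ 0),
      show (m+n)+(m+n) = 2*(m+n) from by ring, zpow_mul]
    norm_num
  have hQne : ((-1:ℂ)^(m+n)) ≠ 0 := zpow_ne_zero _ (by norm_num)
  have hfirst : θ (zmap k) / θ (zmap (k + p))
      = (-1 : ℂ) ^ (m + n) *
        Complex.exp ((Real.pi : ℂ) * Complex.I * (n : ℂ)^2 * ω
          + 2 * (Real.pi : ℂ) * Complex.I * (n : ℂ) * zmap k) := by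
    have hq := theta_quasi (zmap k) m n
    have harg : zmap k + (m:ℂ) + (n:ℂ)*ω = zmap (k+p) := by rw [hzmapadd]; ring
    rw [harg] at hq
    rw [hq]
    have hE : Complex.exp ((Real.pi:ℂ)*Complex.I*(n:ℂ)^2*ω + 2*(Real.pi:ℂ)*Complex.I*(n:ℂ)*zmap k)
        * Complex.exp (-(Real.pi:ℂ)*Complex.I*(n:ℂ)^2*ω - 2*(Real.pi:ℂ)*Complex.I*(n:ℂ)*zmap k)
        = 1 := by
      rw [← Complex.exp_add,
        show (Real.pi:ℂ)*Complex.I*(n:ℂ)^2*ω + 2*(Real.pi:ℂ)*Complex.I*(n:ℂ)*zmap k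
          + (-(Real.pi:ℂ)*Complex.I*(n:ℂ)^2*ω - 2*(Real.pi:ℂ)*Complex.I*(n:ℂ)*zmap k) = 0
          from by ring, Complex.exp_zero]
    rw [div_eq_iff (mul_ne_zero (mul_ne_zero hQne (Complex.exp_ne_zero _)) hθk)]
    linear_combination (-(θ (zmap k)) * ((-1:ℂ)^(m+n)) * ((-1:ℂ)^(m+n))) * hE
      + (-(θ (zmap k))) * hQQ
  refine ⟨hfirst, ?_⟩
  intro z hzΛ
  have hθz := theta_ne_zero hzΛ
  have hq2 := theta_quasi (z - zmap (k+p)) m n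
  have harg2 : z - zmap (k+p) + (m:ℂ) + (n:ℂ)*ω = z - zmap k := by rw [hzmapadd]; ring
  rw [harg2] at hq2
  have hpair : ((pairing z p : ℝ) : ℂ)
      = (z * (starRingEnd ℂ) p + (starRingEnd ℂ) z * p) / 2 := by
    rw [pairing]
    have h1 : (starRingEnd ℂ) (z * (starRingEnd ℂ) p) = (starRingEnd ℂ) z * p := by
      rw [map_mul, Complex.conj_conj]
    have h2 := Complex.add_conj (z * (starRingEnd ℂ) p)
    rw [h1] at h2
    rw [h2]
    push_cast
    ring
  have hprod : Complex.exp ((Complex.I / 2) * (z - (starRingEnd ℂ) z) * (k+p))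
        * Complex.exp ((Real.pi:ℂ)*Complex.I*(n:ℂ)^2*ω + 2*(Real.pi:ℂ)*Complex.I*(n:ℂ)*zmap k)
      = Complex.exp (-Complex.I * ((pairing z p : ℝ) : ℂ))
        * (Complex.exp ((Complex.I / 2) * (z - (starRingEnd ℂ) z) * k)
          * Complex.exp (-(Real.pi:ℂ)*Complex.I*(n:ℂ)^2*ω
              - 2*(Real.pi:ℂ)*Complex.I*(n:ℂ)*(z - zmap (k+p)))) := by
    rw [← Complex.exp_add, ← Complex.exp_add, ← Complex.exp_add]
    rw [show (Complex.I / 2) * (z - (starRingEnd ℂ) z) * (k+p)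
          + ((Real.pi:ℂ)*Complex.I*(n:ℂ)^2*ω + 2*(Real.pi:ℂ)*Complex.I*(n:ℂ)*zmap k)
        = (-Complex.I * ((pairing z p : ℝ) : ℂ)
          + ((Complex.I / 2) * (z - (starRingEnd ℂ) z) * k
            + (-(Real.pi:ℂ)*Complex.I*(n:ℂ)^2*ω
              - 2*(Real.pi:ℂ)*Complex.I*(n:ℂ)*(z - zmap (k+p)))))
          + (((-(n*m)) : ℤ) : ℂ) * (2*(Real.pi:ℂ)*Complex.I) from ?_]
    · rw [Complex.exp_add, Complex.exp_int_mul_two_pi_mul_I, mul_one]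
    · rw [hpair, hconjp, hzmapadd]
      push_cast
      ring
  rw [hfirst, F, F, hq2]
  set e1 := Complex.exp ((Complex.I / 2) * (z - (starRingEnd ℂ) z) * (k+p)) with he1
  set e2 := Complex.exp ((Real.pi:ℂ)*Complex.I*(n:ℂ)^2*ω + 2*(Real.pi:ℂ)*Complex.I*(n:ℂ)*zmap k)
    with he2
  set e3 := Complex.exp (-Complex.I * ((pairing z p : ℝ) : ℂ)) with he3
  set e4 := Complex.exp ((Complex.I / 2) * (z - (starRingEnd ℂ) z) * k) with he4
  set e5 := Complex.exp (-(Real.pi:ℂ)*Complex.I*(n:ℂ)^2*ω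
      - 2*(Real.pi:ℂ)*Complex.I*(n:ℂ)*(z - zmap (k+p))) with he5
  have he2ne : e2 ≠ 0 := Complex.exp_ne_zero _
  set Q := (-1:ℂ)^(m+n) with hQd
  set θw := θ (z - zmap (k+p)) with hθw
  -- hprod : e1 * e2 = e3 * (e4 * e5)
  field_simp [hθz, hQne, he2ne]
  linear_combination θw * hprod

end
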